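/- (Theorem 2, stochastic limsup bound) Let E be a real Hilbert space, K ⊆ E nonempty closed convex, Φ : E → E M-strongly monotone and L-Lipschitz on K with 0 < M, 0 < L, 0 < ε < 2M/L², and let x* ∈ K be the fixed point of x ↦ proj_K(x − εΦ(x)). Suppose the stochastic iteration X^{k+1} = proj_K(X^k − εΨ_k(X^k)) uses random operators Ψ_k whose errors are conditionally unbiased, E[Ψ_k(X^k) | X^k] = Φ(X^k), and satisfy E[‖Ψ_k(X^k) − Φ(X^k)‖²] ≤ β for all k. Then lim sup_{k→∞} E[‖X^k − x*‖²] ≤ ε²β / (2εM − ε²L²) = β / (2M/ε − L²). -/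

import Mathlib

set_option maxHeartbeats 1000000

open scoped RealInnerProductSpace
open MeasureTheory TopologicalSpace

/-- `P` is the metric projection onto the nonempty closed convex set `K`:
for every `u`, `P u ∈ K` and `⟪u - P u, x - P u⟫ ≤ 0` for all `x ∈ K`. -/
def IsMetricProjection {E : Type*} [NormedAddCommGroup E] [InnerProductSpace ℝ E]
    (K : Set E) (P : E → E) : Prop :=
  ∀ u : E, P u ∈ K ∧ ∀ x ∈ K, ⟪u - P u, x - P u⟫ ≤ 0

lemma metricProj_nonexpansive' {E : Type*} [NormedAddCommGroup E] [InnerProductSpace ℝ E]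
    {K : Set E} {P : E → E}
    (hP : IsMetricProjection K P) (u v : E) :
    ‖P u - P v‖ ≤ ‖u - v‖ := by
  obtain ⟨huK, hu⟩ := hP u
  obtain ⟨hvK, hv⟩ := hP v
  have h1 := hu (P v) hvK
  have h2 := hv (P u) huK
  have key : ‖P u - P v‖ ^ 2 ≤ ⟪u - v, P u - P v⟫ := by
    have e1 : ⟪u - v, P u - P v⟫ - ‖P u - P v‖ ^ 2
        = -⟪u - P u, P v - P u⟫ - ⟪v - P v, P u - P v⟫ := by
      rw [← real_inner_self_eq_norm_sq]
      simp only [inner_sub_left, inner_sub_right]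
      ring
    linarith
  have h3 : ⟪u - v, P u - P v⟫ ≤ ‖u - v‖ * ‖P u - P v‖ := real_inner_le_norm _ _
  by_contra hcon
  push_neg at hcon
  have hn : 0 < ‖P u - P v‖ := lt_of_le_of_lt (norm_nonneg _) hcon
  nlinarith [mul_pos (sub_pos.2 hcon) hn]

lemma isSeparable_of_expansive' {E : Type*} [NormedAddCommGroup E]
    {s : Set E} {f : E → E} {M : ℝ} (hM : 0 < M)
    (hexp : ∀ x ∈ s, ∀ y ∈ s, M * ‖x - y‖ ≤ ‖f x - f y‖)
    (hsep : TopologicalSpace.IsSeparable (f '' s)) :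
    TopologicalSpace.IsSeparable s := by
  obtain ⟨c, hc_count, hc⟩ := hsep
  have hmain : ∀ (q : E) (n : ℕ), ∃ y : E,
      (∃ x ∈ s, dist (f x) q < ((n : ℝ) + 1)⁻¹) →
        y ∈ s ∧ dist (f y) q < ((n : ℝ) + 1)⁻¹ := by
    intro q n
    by_cases h : ∃ x ∈ s, dist (f x) q < ((n : ℝ) + 1)⁻¹
    · obtain ⟨x, hx, hd⟩ := h; exact ⟨x, fun _ => ⟨hx, hd⟩⟩
    · exact ⟨0, fun hcc => absurd hcc h⟩
  choose u hu using hmain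
  refine ⟨⋃ n : ℕ, (fun q => u q n) '' c,
    Set.countable_iUnion fun n => hc_count.image _, ?_⟩
  intro x hx
  rw [Metric.mem_closure_iff]
  intro δ hδ
  obtain ⟨n, hn⟩ := exists_nat_gt (2 / (M * δ))
  have hn1 : (0:ℝ) < (n : ℝ) + 1 := by positivity
  have hq : f x ∈ closure c := hc ⟨x, hx, rfl⟩
  obtain ⟨q, hqc, hdq⟩ := Metric.mem_closure_iff.1 hq _ (inv_pos.2 hn1)
  obtain ⟨hus, hud⟩ := hu q n ⟨x, hx, hdq⟩
  refine ⟨u q n, Set.mem_iUnion.2 ⟨n, Set.mem_image_of_mem _ hqc⟩, ?_⟩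
  have h1 : dist (f x) (f (u q n)) < 2 * ((n : ℝ) + 1)⁻¹ := by
    calc dist (f x) (f (u q n)) ≤ dist (f x) q + dist (f (u q n)) q := dist_triangle_right _ _ _
    _ < ((n : ℝ) + 1)⁻¹ + ((n : ℝ) + 1)⁻¹ := by linarith
    _ = 2 * ((n : ℝ) + 1)⁻¹ := by ring
  have h2 : M * ‖x - u q n‖ ≤ ‖f x - f (u q n)‖ := hexp x hx _ hus
  have h3 : 2 * ((n : ℝ) + 1)⁻¹ < M * δ := by
    rw [div_lt_iff₀ (by positivity)] at hn
    rw [mul_inv_lt_iff₀' hn1]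
    nlinarith
  rw [dist_eq_norm] at h1 ⊢
  have := h2.trans_lt (h1.trans h3)
  exact lt_of_mul_lt_mul_left this hM.le

lemma limsup_le_of_recurrence' (a : ℕ → ℝ) (b c : ℝ) (hc0 : 0 ≤ c) (hc1 : c < 1)
    (ha0 : ∀ k, 0 ≤ a k) (hrec : ∀ k, 1 ≤ k → a (k + 1) ≤ c * a k + b) :
    Filter.limsup a Filter.atTop ≤ b / (1 - c) := by
  have h1c : 0 < 1 - c := by linarith
  set A := max (a 1) (b / (1 - c)) with hA
  have hdivA : b / (1 - c) ≤ A := le_max_right _ _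
  have hcAb : c * A + b ≤ A := by
    have : b = (1 - c) * (b / (1 - c)) := by field_simp
    nlinarith
  have hbd : ∀ k, 1 ≤ k → a k ≤ A := by
    intro k hk
    induction k, hk using Nat.le_induction with
    | base => exact le_max_left _ _
    | succ n hn ih =>
      have h := hrec n hn
      nlinarith
  have hbdd : Filter.IsBoundedUnder (· ≤ ·) Filter.atTop a :=
    ⟨A, Filter.eventually_atTop.2 ⟨1, hbd⟩⟩
  have hcob : Filter.IsCoboundedUnder (· ≤ ·) Filter.atTop a :=
    Filter.isCoboundedUnder_le_of_eventually_le _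
      (Filter.Eventually.of_forall ha0)
  set S := Filter.limsup a Filter.atTop with hS
  have key : ∀ δ : ℝ, 0 < δ → S ≤ c * (S + δ) + b := by
    intro δ hδ
    have hev : ∀ᶠ k in Filter.atTop, a k < S + δ :=
      Filter.eventually_lt_of_limsup_lt (by linarith) hbdd
    obtain ⟨N, hN⟩ := Filter.eventually_atTop.1 hev
    refine Filter.limsup_le_of_le hcob ?_
    refine Filter.eventually_atTop.2 ⟨N + 2, fun k hk => ?_⟩
    obtain ⟨j, rfl⟩ : ∃ j, k = j + 1 := ⟨k - 1, by omega⟩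
    have h1 := hrec j (by omega)
    have h2 := (hN j (by omega)).le
    nlinarith
  have hfin : S * (1 - c) ≤ b := by
    refine le_of_forall_pos_le_add fun ε hε => ?_
    have hc1' : 0 < c + 1 := by linarith
    have h1 := key (ε / (c + 1)) (by positivity)
    have h2 : c * (ε / (c + 1)) ≤ ε := by
      rw [mul_div_assoc', div_le_iff₀ hc1']
      nlinarith
    nlinarith
  rw [le_div_iff₀ h1c]
  exact hfin

/-- Theorem 2 (stochastic limsup bound): the stochastic projected gradient iteration
`X^{k+1} = proj_K(X^k - εΨ_k(X^k))` with conditionally unbiased gradient errors of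
mean-square at most `β` satisfies
`lim sup_{k→∞} E[‖X^k - x*‖²] ≤ ε²β / (2εM - ε²L²) = β / (2M/ε - L²)`. -/
theorem stochastic_projected_gradient_limsup_bound
    {E : Type*} [NormedAddCommGroup E] [InnerProductSpace ℝ E] [CompleteSpace E]
    [MeasurableSpace E] [BorelSpace E]
    (K : Set E) (hne : K.Nonempty) (hcl : IsClosed K) (hconv : Convex ℝ K)
    (P : E → E) (hP : IsMetricProjection K P)
    (Φ : E → E) (M L ε : ℝ) (hM : 0 < M) (hL : 0 < L)
    (hmono : ∀ x ∈ K, ∀ y ∈ K, M * ‖x - y‖ ^ 2 ≤ ⟪Φ x - Φ y, x - y⟫)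
    (hlip : ∀ x ∈ K, ∀ y ∈ K, ‖Φ x - Φ y‖ ≤ L * ‖x - y‖)
    (hε0 : 0 < ε) (hε : ε < 2 * M / L ^ 2)
    (xs : E) (hxsK : xs ∈ K) (hxs : P (xs - ε • Φ xs) = xs)
    {Ω : Type*} [MeasurableSpace Ω] (μ : Measure Ω) [IsProbabilityMeasure μ]
    (X : ℕ → Ω → E) (Ψ : ℕ → Ω → E → E) (β : ℝ)
    (hXmeas : ∀ k, Measurable (X k))
    (hΨmeas : ∀ k, Measurable fun ω => Ψ k ω (X k ω))
    (hunbiased : ∀ k,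
      μ[(fun ω => Ψ k ω (X k ω)) | MeasurableSpace.comap (X k) inferInstance]
        =ᵐ[μ] fun ω => Φ (X k ω))
    (herrInt : ∀ k, Integrable (fun ω => ‖Ψ k ω (X k ω) - Φ (X k ω)‖ ^ 2) μ)
    (herr : ∀ k, ∫ ω, ‖Ψ k ω (X k ω) - Φ (X k ω)‖ ^ 2 ∂μ ≤ β)
    (hXint : ∀ k, Integrable (fun ω => ‖X k ω - xs‖ ^ 2) μ)
    (hiter : ∀ k, ∀ ω, X (k + 1) ω = P (X k ω - ε • Ψ k ω (X k ω))) :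
    Filter.limsup (fun k : ℕ => ∫ ω, ‖X k ω - xs‖ ^ 2 ∂μ) Filter.atTop ≤
      ε ^ 2 * β / (2 * ε * M - ε ^ 2 * L ^ 2) := by
  classical
  set a : ℕ → ℝ := fun k => ∫ ω, ‖X k ω - xs‖ ^ 2 ∂μ with ha_def
  have ha0 : ∀ k, 0 ≤ a k := fun k => integral_nonneg fun ω => by positivity
  have hβ0 : 0 ≤ β :=
    le_trans (integral_nonneg fun ω => by positivity) (herr 0)
  have hden : 0 < 2 * ε * M - ε ^ 2 * L ^ 2 := by
    rw [lt_div_iff₀ (by positivity : (0:ℝ) < L ^ 2)] at hε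
    nlinarith [mul_pos hε0 (sub_pos.2 hε)]
  have hXK : ∀ k, 1 ≤ k → ∀ ω, X k ω ∈ K := by
    intro k hk ω
    obtain ⟨j, rfl⟩ : ∃ j, k = j + 1 := ⟨k - 1, by omega⟩
    rw [hiter j ω]
    exact (hP _).1
  have hVI : ∀ x ∈ K, 0 ≤ ⟪Φ xs, x - xs⟫ := by
    intro x hxK
    have h := (hP (xs - ε • Φ xs)).2 x hxK
    rw [hxs] at h
    have heq : xs - ε • Φ xs - xs = -(ε • Φ xs) := by abel
    rw [heq, inner_neg_left, real_inner_smul_left] at h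
    nlinarith
  -- nonnegativity of the RHS
  have hbnn : (0:ℝ) ≤ ε ^ 2 * β := by positivity
  by_cases hKs : ∃ y ∈ K, y ≠ xs
  · -- main case
    obtain ⟨y, hyK, hyne⟩ := hKs
    have hML : M ≤ L := by
      have h1 := hmono y hyK xs hxsK
      have h3 : ⟪Φ y - Φ xs, y - xs⟫ ≤ ‖Φ y - Φ xs‖ * ‖y - xs‖ := real_inner_le_norm _ _
      have h2 := hlip y hyK xs hxsK
      have h4 : 0 < ‖y - xs‖ := by
        rw [norm_pos_iff, sub_ne_zero]; exact hyne
      nlinarith [mul_pos h4 h4, mul_le_mul_of_nonneg_right h2 (norm_nonneg (y - xs))]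
    set c : ℝ := 1 - 2 * ε * M + ε ^ 2 * L ^ 2 with hc_def
    have hc0 : 0 ≤ c := by
      nlinarith [sq_nonneg (1 - ε * M),
        mul_nonneg (mul_nonneg (sq_nonneg ε) (sub_nonneg.2 hML)) (by linarith : (0:ℝ) ≤ L + M)]
    have hc1 : c < 1 := by simp only [hc_def]; linarith
    have hrec : ∀ k, 1 ≤ k → a (k + 1) ≤ c * a k + ε ^ 2 * β := by
      intro k hk
      simp only [ha_def]
      have hXkK : ∀ ω, X k ω ∈ K := hXK k hk
      set e : Ω → E := fun ω => Ψ k ω (X k ω) - Φ (X k ω) with he_def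
      set D : Ω → E := fun ω => (X k ω - xs) - ε • (Φ (X k ω) - Φ xs) with hD_def
      have heInt2 : Integrable (fun ω => ‖e ω‖ ^ 2) μ := by
        simp only [he_def]; exact herrInt k
      have heint2le : ∫ ω, ‖e ω‖ ^ 2 ∂μ ≤ β := by
        simp only [he_def]; exact herr k
      have hDnorm : ∀ ω, ‖D ω‖ ≤ (1 + ε * L) * ‖X k ω - xs‖ := by
        intro ω
        have h1 : ‖D ω‖ ≤ ‖X k ω - xs‖ + ‖ε • (Φ (X k ω) - Φ xs)‖ := norm_sub_le _ _
        rw [norm_smul, Real.norm_eq_abs, abs_of_pos hε0] at h1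
        have h2 := hlip (X k ω) (hXkK ω) xs hxsK
        nlinarith [norm_nonneg (Φ (X k ω) - Φ xs)]
      have hpoint : ∀ ω, ‖X (k+1) ω - xs‖ ^ 2 ≤
          c * ‖X k ω - xs‖ ^ 2 - 2 * ε * ⟪D ω, e ω⟫ + ε ^ 2 * ‖e ω‖ ^ 2 := by
        intro ω
        have hPn : ‖X (k+1) ω - xs‖ ≤ ‖D ω - ε • e ω‖ := by
          have hnon := metricProj_nonexpansive' hP (X k ω - ε • Ψ k ω (X k ω)) (xs - ε • Φ xs)
          rw [hxs, ← hiter k ω] at hnon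
          refine hnon.trans_eq ?_
          congr 1
          simp only [he_def, hD_def, smul_sub]
          abel
        have hsq : ‖X (k+1) ω - xs‖ ^ 2 ≤ ‖D ω - ε • e ω‖ ^ 2 :=
          pow_le_pow_left₀ (norm_nonneg _) hPn 2
        have hexp : ‖D ω - ε • e ω‖ ^ 2
            = ‖D ω‖ ^ 2 - 2 * ε * ⟪D ω, e ω⟫ + ε ^ 2 * ‖e ω‖ ^ 2 := by
          rw [norm_sub_sq_real, real_inner_smul_right, norm_smul, Real.norm_eq_abs,
            abs_of_pos hε0, mul_pow]
          ring
        have hDsq : ‖D ω‖ ^ 2 ≤ c * ‖X k ω - xs‖ ^ 2 := by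
          have hexp2 : ‖D ω‖ ^ 2 = ‖X k ω - xs‖ ^ 2
              - 2 * ε * ⟪X k ω - xs, Φ (X k ω) - Φ xs⟫
              + ε ^ 2 * ‖Φ (X k ω) - Φ xs‖ ^ 2 := by
            simp only [hD_def]
            rw [norm_sub_sq_real, real_inner_smul_right, norm_smul, Real.norm_eq_abs,
              abs_of_pos hε0, mul_pow]
            ring
          have hm1 := hmono (X k ω) (hXkK ω) xs hxsK
          rw [real_inner_comm] at hm1
          have hl1 := hlip (X k ω) (hXkK ω) xs hxsK
          have hl2 : ‖Φ (X k ω) - Φ xs‖ ^ 2 ≤ L ^ 2 * ‖X k ω - xs‖ ^ 2 := by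
            nlinarith [norm_nonneg (Φ (X k ω) - Φ xs), norm_nonneg (X k ω - xs)]
          have hc_eq : c * ‖X k ω - xs‖ ^ 2 = ‖X k ω - xs‖ ^ 2
              - 2 * ε * (M * ‖X k ω - xs‖ ^ 2) + ε ^ 2 * (L ^ 2 * ‖X k ω - xs‖ ^ 2) := by
            rw [hc_def]; ring
          rw [hexp2, hc_eq]
          have hh1 := mul_le_mul_of_nonneg_left hl2 (sq_nonneg ε)
          have hh2 := mul_le_mul_of_nonneg_left hm1 (by linarith : (0:ℝ) ≤ 2 * ε)
          linarith
        linarith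
      by_cases hintΨ : Integrable (fun ω => Ψ k ω (X k ω)) μ
      · -- unbiasedness kills the cross term
        have hm := (hXmeas k).comap_le
        haveI hfin : IsFiniteMeasure (μ.trim hm) := isFiniteMeasure_trim hm
        haveI : SigmaFinite (μ.trim hm) := inferInstance
        have hcond := hunbiased k
        have hΦXaesm : AEStronglyMeasurable (fun ω => Φ (X k ω)) μ :=
          (((stronglyMeasurable_condExp (m := MeasurableSpace.comap (X k) inferInstance)
            (f := fun ω => Ψ k ω (X k ω))).mono hm).aestronglyMeasurable).congr hcond
        have heaesm : AEStronglyMeasurable e μ := by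
          simp only [he_def]; exact hintΨ.1.sub hΦXaesm
        have heL2 : MemLp e 2 μ := (memLp_two_iff_integrable_sq_norm heaesm).2 heInt2
        have hΦXint : Integrable (fun ω => Φ (X k ω)) μ := integrable_condExp.congr hcond
        -- a separable set `s` carrying `X k` a.e.
        obtain ⟨g0, hg0sm, hg0eq⟩ : ∃ g0, StronglyMeasurable[MeasurableSpace.comap (X k) inferInstance] g0 ∧
            (fun ω => Φ (X k ω)) =ᵐ[μ] g0 :=
          ⟨_, stronglyMeasurable_condExp, hcond.symm⟩
        set s : Set E := {x | x ∈ K ∧ Φ x ∈ closure (Set.range g0)} with hs_def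
        have hXs : ∀ᵐ ω ∂μ, X k ω ∈ s :=
          hg0eq.mono fun ω h => ⟨hXkK ω, subset_closure ⟨ω, h.symm⟩⟩
        have hexps : ∀ x ∈ s, ∀ y ∈ s, M * ‖x - y‖ ≤ ‖Φ x - Φ y‖ := by
          intro x hx y hy
          rcases eq_or_ne x y with rfl | hne
          · simp
          · have h1 := hmono x hx.1 y hy.1
            have h3 := real_inner_le_norm (Φ x - Φ y) (x - y)
            have h4 : 0 < ‖x - y‖ := by rw [norm_pos_iff, sub_ne_zero]; exact hne
            nlinarith
        have hssep : TopologicalSpace.IsSeparable s := by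
          refine isSeparable_of_expansive' hM hexps
            ((hg0sm.isSeparable_range.closure).mono ?_)
          rintro z ⟨x, hx, rfl⟩
          exact hx.2
        -- measurability of D with respect to m
        have hXm : Measurable[MeasurableSpace.comap (X k) inferInstance] (X k) := Measurable.of_comap_le le_rfl
        have hΦcont : Continuous (fun p : K => Φ (p : E)) := by
          have hlipOn : LipschitzOnWith (Real.toNNReal L) Φ K := by
            refine LipschitzOnWith.of_dist_le_mul fun x hx y hy => ?_
            rw [dist_eq_norm, dist_eq_norm, Real.coe_toNNReal L hL.le]
            exact hlip x hx y hy
          exact hlipOn.continuousOn.restrict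
        have hDmeas : Measurable[MeasurableSpace.comap (X k) inferInstance] D := by
          have h1 : Measurable[MeasurableSpace.comap (X k) inferInstance] (fun ω => (⟨X k ω, hXkK ω⟩ : K)) :=
            hXm.subtype_mk
          have h2 : Continuous (fun p : K => ((p : E) - xs) - ε • (Φ (p : E) - Φ xs)) :=
            (continuous_subtype_val.sub continuous_const).sub
              ((hΦcont.sub continuous_const).const_smul ε)
          exact h2.measurable.comp h1
        -- D is a.e. separably valued
        have hsK : s ⊆ K := fun x hx => hx.1
        have hsubcont : Continuous (fun p : s => ((p : E) - xs) - ε • (Φ (p : E) - Φ xs)) := by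
          have hc1 : Continuous (fun p : s => Φ (p : E)) :=
            hΦcont.comp (continuous_inclusion hsK)
          exact (continuous_subtype_val.sub continuous_const).sub
            ((hc1.sub continuous_const).const_smul ε)
        haveI : SeparableSpace s := hssep.separableSpace
        have hAsep : TopologicalSpace.IsSeparable
            (Set.range fun p : s => ((p : E) - xs) - ε • (Φ (p : E) - Φ xs)) :=
          isSeparable_range hsubcont
        set A : Set E :=
          closure (Set.range fun p : s => ((p : E) - xs) - ε • (Φ (p : E) - Φ xs)) with hA_def
        have hDA : ∀ᵐ ω ∂μ, D ω ∈ A :=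
          hXs.mono fun ω h => subset_closure ⟨⟨X k ω, h⟩, rfl⟩
        set B : Set Ω := D ⁻¹' A with hB_def
        have hBmeas : MeasurableSet[MeasurableSpace.comap (X k) inferInstance] B := hDmeas isClosed_closure.measurableSet
        set D' : Ω → E := B.piecewise D (fun _ => 0) with hD'_def
        have hD'sm : StronglyMeasurable[MeasurableSpace.comap (X k) inferInstance] D' := by
          rw [stronglyMeasurable_iff_measurable_separable]
          refine ⟨Measurable.piecewise hBmeas hDmeas measurable_const, ?_⟩
          refine (hAsep.closure.union
            ((Set.countable_singleton (0:E)).isSeparable)).mono ?_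
          rintro z ⟨ω, rfl⟩
          simp only [hD'_def]
          by_cases h : ω ∈ B
          · rw [Set.piecewise_eq_of_mem _ _ _ h]
            exact Or.inl h
          · rw [Set.piecewise_eq_of_notMem _ _ _ h]
            exact Or.inr rfl
        have hDD' : D =ᵐ[μ] D' := hDA.mono fun ω h => (Set.piecewise_eq_of_mem B D (fun _ => (0:E)) h).symm
        have hDaesm : AEStronglyMeasurable D μ := ⟨D', hD'sm.mono hm, hDD'⟩
        have hgnorm_aesm : AEStronglyMeasurable (fun ω => ‖X k ω - xs‖) μ :=
          (((hXmeas k).sub_const xs).norm).aestronglyMeasurable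
        have hgL2 : MemLp (fun ω => ‖X k ω - xs‖) 2 μ := by
          refine (memLp_two_iff_integrable_sq_norm hgnorm_aesm).2 ?_
          simpa only [norm_norm] using hXint k
        have hDL2 : MemLp D 2 μ := by
          refine MemLp.of_le_mul (c := 1 + ε * L) hgL2 hDaesm (Filter.Eventually.of_forall fun ω => ?_)
          rw [norm_norm]
          exact hDnorm ω
        -- the cross term vanishes
        have hsetint : ∀ t : Set Ω, MeasurableSet[MeasurableSpace.comap (X k) inferInstance] t → ∫ ω in t, e ω ∂μ = 0 := by
          intro t ht
          have h1 : ∫ ω in t, Φ (X k ω) ∂μ = ∫ ω in t, Ψ k ω (X k ω) ∂μ := by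
            rw [← setIntegral_condExp hm hintΨ ht]
            exact integral_congr_ae (ae_restrict_of_ae hcond.symm)
          simp only [he_def]
          rw [integral_sub hintΨ.integrableOn hΦXint.integrableOn, h1, sub_self]
        set eL := heL2.toLp e with heL_def
        set DL := hDL2.toLp D with hDL_def
        have hDL_aesm' : AEStronglyMeasurable[MeasurableSpace.comap (X k) inferInstance] (DL : Ω → E) μ :=
          ⟨D', hD'sm, (hDL2.coeFn_toLp).trans hDD'⟩
        have hcondL2 : ((condExpL2 E ℝ hm eL : Ω →₂[μ] E) : Ω → E) =ᵐ[μ] 0 := by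
          refine lpMeas.ae_eq_zero_of_forall_setIntegral_eq_zero hm (condExpL2 E ℝ hm eL)
            two_ne_zero ENNReal.ofNat_ne_top
            (fun t ht hμt => integrableOn_condExpL2_of_measure_ne_top hm hμt.ne _)
            (fun t ht hμt => ?_)
          rw [integral_condExpL2_eq hm eL ht hμt.ne]
          rw [integral_congr_ae (ae_restrict_of_ae heL2.coeFn_toLp)]
          exact hsetint t ht
        have hinner0 : ∫ ω, ⟪e ω, D ω⟫ ∂μ = 0 := by
          have h1 : ∫ ω, ⟪e ω, D ω⟫ ∂μ = ⟪eL, DL⟫ := by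
            rw [L2.inner_def]
            refine integral_congr_ae ?_
            filter_upwards [heL2.coeFn_toLp, hDL2.coeFn_toLp] with ω h1 h2
            rw [h1, h2]
          have h2 : ⟪eL, DL⟫ = ⟪(condExpL2 E ℝ hm eL : Ω →₂[μ] E), DL⟫ :=
            (inner_condExpL2_eq_inner_fun hm eL DL hDL_aesm').symm
          have h3 : ⟪(condExpL2 E ℝ hm eL : Ω →₂[μ] E), DL⟫ = 0 := by
            rw [L2.inner_def]
            have hz : (fun ω => ⟪(condExpL2 E ℝ hm eL : Ω →₂[μ] E) ω, DL ω⟫)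
                =ᵐ[μ] (fun _ => (0:ℝ)) := by
              filter_upwards [hcondL2] with ω h
              rw [h]
              simp
            rw [integral_congr_ae hz, integral_zero]
          rw [h1, h2, h3]
        have hcross0 : ∫ ω, ⟪D ω, e ω⟫ ∂μ = 0 := by
          simp_rw [real_inner_comm]
          exact hinner0
        have hcrossInt : Integrable (fun ω => ⟪D ω, e ω⟫) μ := by
          refine Integrable.mono'
            (g := fun ω => ((1 + ε * L) ^ 2 * ‖X k ω - xs‖ ^ 2 + ‖e ω‖ ^ 2) / 2)
            ((((hXint k).const_mul _).add heInt2).div_const 2)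
            (hDaesm.inner heaesm) (Filter.Eventually.of_forall fun ω => ?_)
          rw [Real.norm_eq_abs]
          have h1 := abs_real_inner_le_norm (D ω) (e ω)
          have h2 := hDnorm ω
          nlinarith [norm_nonneg (e ω), norm_nonneg (D ω), norm_nonneg (X k ω - xs),
            sq_nonneg ((1 + ε * L) * ‖X k ω - xs‖ - ‖e ω‖)]
        -- integrate the pointwise bound
        have hint1 : Integrable (fun ω => c * ‖X k ω - xs‖ ^ 2 - 2 * ε * ⟪D ω, e ω⟫) μ :=
          ((hXint k).const_mul c).sub (hcrossInt.const_mul (2 * ε))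
        have hint2 : Integrable (fun ω => ε ^ 2 * ‖e ω‖ ^ 2) μ := heInt2.const_mul _
        have hstep := integral_mono (hXint (k+1)) (hint1.add hint2) hpoint
        simp only [Pi.add_apply] at hstep
        have hsplit : ∫ ω, (c * ‖X k ω - xs‖ ^ 2 - 2 * ε * ⟪D ω, e ω⟫
              + ε ^ 2 * ‖e ω‖ ^ 2) ∂μ
            = c * (∫ ω, ‖X k ω - xs‖ ^ 2 ∂μ) - 2 * ε * (∫ ω, ⟪D ω, e ω⟫ ∂μ)
              + ε ^ 2 * ∫ ω, ‖e ω‖ ^ 2 ∂μ := by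
          rw [integral_add hint1 hint2,
            integral_sub ((hXint k).const_mul c) (hcrossInt.const_mul (2 * ε)),
            integral_const_mul, integral_const_mul, integral_const_mul]
        have hlast : ε ^ 2 * ∫ ω, ‖e ω‖ ^ 2 ∂μ ≤ ε ^ 2 * β :=
          mul_le_mul_of_nonneg_left heint2le (sq_nonneg ε)
        rw [hsplit, hcross0, mul_zero, sub_zero] at hstep
        linarith
      · -- degenerate branch: `Ψ∘X k` is not Bochner integrable
        have h0 := hunbiased k
        rw [condExp_of_not_integrable hintΨ] at h0
        have hzero : ∀ᵐ ω ∂μ, Φ (X k ω) = 0 := h0.symm.mono fun ω h => by simpa using h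
        have hXxs : ∀ᵐ ω ∂μ, X k ω = xs := by
          refine hzero.mono fun ω hω => ?_
          have hm1 := hmono (X k ω) (hXkK ω) xs hxsK
          rw [hω, zero_sub, inner_neg_left] at hm1
          have h2 := hVI (X k ω) (hXkK ω)
          have h4 : ‖X k ω - xs‖ ^ 2 ≤ 0 := by nlinarith
          have h3 : ‖X k ω - xs‖ = 0 :=
            pow_eq_zero_iff two_ne_zero |>.1 (le_antisymm h4 (sq_nonneg _))
          rwa [norm_eq_zero, sub_eq_zero] at h3
        have hΦxs : Φ xs = 0 := by
          obtain ⟨ω, h1, h2⟩ := (hXxs.and hzero).exists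
          rw [← h1]; exact h2
        have hae : ∀ᵐ ω ∂μ, ‖X (k+1) ω - xs‖ ^ 2 ≤ ε ^ 2 * ‖e ω‖ ^ 2 := by
          filter_upwards [hXxs, hzero] with ω h1 h2
          have hb : ‖X (k+1) ω - xs‖ ≤ ‖(X k ω - ε • Ψ k ω (X k ω)) - (xs - ε • Φ xs)‖ := by
            rw [hiter k ω]
            conv_lhs => rw [← hxs]
            exact metricProj_nonexpansive' hP _ _
          have heq : (X k ω - ε • Ψ k ω (X k ω)) - (xs - ε • Φ xs) = -(ε • e ω) := by
            simp only [he_def, h1, h2, hΦxs, smul_zero, sub_zero, smul_sub]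
            abel
          rw [heq, norm_neg, norm_smul, Real.norm_eq_abs, abs_of_pos hε0] at hb
          nlinarith [norm_nonneg (X (k+1) ω - xs), norm_nonneg (e ω)]
        have hstep := integral_mono_ae (hXint (k+1)) (heInt2.const_mul (ε ^ 2)) hae
        rw [integral_const_mul] at hstep
        have hlast : ε ^ 2 * ∫ ω, ‖e ω‖ ^ 2 ∂μ ≤ ε ^ 2 * β :=
          mul_le_mul_of_nonneg_left heint2le (sq_nonneg ε)
        have hca : 0 ≤ c * a k := mul_nonneg hc0 (ha0 k)
        have : a k = ∫ ω, ‖X k ω - xs‖ ^ 2 ∂μ := rfl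
        linarith
    have hmain := limsup_le_of_recurrence' a (ε ^ 2 * β) c hc0 hc1 ha0 hrec
    have h1c : 1 - c = 2 * ε * M - ε ^ 2 * L ^ 2 := by rw [hc_def]; ring
    rw [h1c] at hmain
    exact hmain
  · -- degenerate case : K ⊆ {xs}
    push_neg at hKs
    refine Filter.limsup_le_of_le (Filter.isCoboundedUnder_le_of_eventually_le _
      (Filter.Eventually.of_forall ha0)) ?_
    refine Filter.eventually_atTop.2 ⟨1, fun k hk => ?_⟩
    have hzero : a k = 0 := by
      have : ∀ ω, ‖X k ω - xs‖ ^ 2 = 0 := by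
        intro ω
        rw [hKs (X k ω) (hXK k hk ω), sub_self, norm_zero]
        norm_num
      simp only [ha_def, this, integral_zero]
    rw [hzero]
    positivity
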